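/- (Upper bound on the oracle threshold) Assume (A1), (B1) and (B2) with constant r, and let α ∈ (0,1). Then 1 − α ≤ (1 − c(α)/r)^B, and consequently c(α) ≤ r (1 − (1−α)^{1/B}) ≤ r log(1/(1−α)) / B. -/

import Mathlib

open scoped ENNReal

noncomputable section

/-- A multiple-testing framework with `m` hypotheses: data space `Ω` with distribution `Q`,
`p`-values `p j` taking values in the finite set `S ⊆ [0,1]`, set of true nulls `I`,
a finite group `G` of measurable bijections of the data space, and a partition
`A 1, …, A B` of the hypotheses into blocks, each containing a true null. -/
structure Framework (m : ℕ) where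
  Ω : Type
  [meas : MeasurableSpace Ω]
  Q : MeasureTheory.Measure Ω
  Qprob : MeasureTheory.IsProbabilityMeasure Q
  S : Finset ℝ
  hS : ∀ s ∈ S, 0 ≤ s ∧ s ≤ 1
  p : Fin m → Ω → ℝ
  p_meas : ∀ j, Measurable (p j)
  p_mem : ∀ j w, p j w ∈ S
  I : Finset (Fin m)
  G : Finset (Ω ≃ᵐ Ω)
  G_one : MeasurableEquiv.refl Ω ∈ G
  G_mul : ∀ g ∈ G, ∀ g' ∈ G, g.trans g' ∈ G
  G_inv : ∀ g ∈ G, g.symm ∈ G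
  B : ℕ
  B_pos : 0 < B
  A : Fin B → Finset (Fin m)
  A_disj : ∀ b b', b ≠ b' → Disjoint (A b) (A b')
  A_cover : ∀ j, ∃ b, j ∈ A b
  A_I : ∀ b, (A b ∩ I).Nonempty

attribute [instance] Framework.meas Framework.Qprob

open MeasureTheory ProbabilityTheory Filter

namespace Framework

variable {m : ℕ} (F : Framework m)

/-- Minimum of the `p`-values over the index set `J` (`1` by convention if `J = ∅`). -/
def fmin (J : Finset (Fin m)) (w : F.Ω) : ℝ :=
  if h : J.Nonempty then J.inf' h (fun j => F.p j w) else 1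

/-- `min_{j ∈ I} p_j(w)`, the minimal `p`-value over the true null hypotheses. -/
def nullMin : F.Ω → ℝ := F.fmin F.I

/-- `min_{1 ≤ j ≤ m} p_j(w)`, the minimal `p`-value over all hypotheses. -/
def fullMin : F.Ω → ℝ := F.fmin Finset.univ

/-- `p^(b)(w) = min_{j ∈ A_b ∩ I} p_j(w)`, the minimal null `p`-value in block `b`. -/
def blockMin (b : Fin F.B) : F.Ω → ℝ := F.fmin (F.A b ∩ F.I)

/-- The permutation probability `P*(E)(w) = |G|⁻¹ ∑_{g ∈ G} 1{g w ∈ E}`. -/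
def Pstar (E : Set F.Ω) (w : F.Ω) : ℝ :=
  (F.G.card : ℝ)⁻¹ * ∑ g ∈ F.G, E.indicator (fun _ => (1 : ℝ)) (g w)

/-- The oracle threshold `c(α) = max {s ∈ S : Q(min_{j ∈ I} p_j(W) ≤ s) ≤ α}`,
with `max ∅ := 0`. -/
def oracle (α : ℝ) : ℝ :=
  WithBot.unbotD 0 ((F.S.filter (fun s => (F.Q {w | F.nullMin w ≤ s}).toReal ≤ α)).max)

/-- The single-step Westfall--Young threshold
`ĉ(α)(w) = max {s ∈ S : P*(min_{1≤j≤m} p_j(W) ≤ s)(w) ≤ α}`, with `max ∅ := 0`. -/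
def wy (α : ℝ) (w : F.Ω) : ℝ :=
  WithBot.unbotD 0 ((F.S.filter (fun s => F.Pstar {w' | F.fullMin w' ≤ s} w ≤ α)).max)

/-- The maximal block size `m_B = max_b |A_b|`. -/
def mB : ℕ := Finset.univ.sup (fun b : Fin F.B => (F.A b).card)

/-- `π_b(c) = Q(p^(b)(W) ≤ c)`. -/
def piB (b : Fin F.B) (c : ℝ) : ℝ := (F.Q {w | F.blockMin b w ≤ c}).toReal

/-- Assumption (A1): for every pair `g, g' ∈ G`, the random variables
`min (p^(b)(gW)) (p^(b)(g'W))`, `b = 1, …, B`, are mutually independent under `Q`. -/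
def A1 : Prop :=
  ∀ g ∈ F.G, ∀ g' ∈ F.G,
    iIndepFun
      (fun b : Fin F.B => fun w => min (F.blockMin b (g w)) (F.blockMin b (g' w))) F.Q

/-- Assumption (B1): for `G` uniformly distributed on the permutation group and independent
of `W`, the joint distribution of `(p_j(GW))_{j ∈ I}` equals that of `(p_j(W))_{j ∈ I}`;
expressed as an equality between the uniform mixture of the pushforwards and the
pushforward of `Q` itself. -/
def B1 : Prop :=
  (F.G.card : ℝ≥0∞)⁻¹ •
      (∑ g ∈ F.G, Measure.map (fun w => fun j : F.I => F.p j (g w)) F.Q)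
    = Measure.map (fun w => fun j : F.I => F.p j w) F.Q

/-- Assumption (B2) with constant `r`:
`r⁻¹ s ≤ P*(p_j(W) ≤ s)(w) ≤ r s` for all `j`, all `s ∈ S` and all `w`. -/
def B2 (r : ℝ) : Prop :=
  ∀ j : Fin m, ∀ s ∈ F.S, ∀ w : F.Ω,
    r⁻¹ * s ≤ F.Pstar {w' | F.p j w' ≤ s} w ∧ F.Pstar {w' | F.p j w' ≤ s} w ≤ r * s

/-- Assumption (B3): null `p`-values are uniformly distributed on `S`:
`Q(p_j(W) ≤ s) = s` for all `j ∈ I`, `s ∈ S`. -/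
def B3 : Prop :=
  ∀ j ∈ F.I, ∀ s ∈ F.S, (F.Q {w | F.p j w ≤ s}).toReal = s

end Framework

namespace Framework

variable {m : ℕ} (F : Framework m)

lemma fmin_le_iff {J : Finset (Fin m)} (hJ : J.Nonempty) (c : ℝ) (w : F.Ω) :
    F.fmin J w ≤ c ↔ ∃ j ∈ J, F.p j w ≤ c := by
  rw [fmin, dif_pos hJ, Finset.inf'_le_iff]

lemma lt_fmin_iff {J : Finset (Fin m)} (hJ : J.Nonempty) (c : ℝ) (w : F.Ω) :
    c < F.fmin J w ↔ ∀ j ∈ J, c < F.p j w := by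
  rw [fmin, dif_pos hJ, Finset.lt_inf'_iff]

lemma setOf_fmin_le {J : Finset (Fin m)} (hJ : J.Nonempty) (c : ℝ) :
    {w | F.fmin J w ≤ c} = ⋃ j ∈ J, {w | F.p j w ≤ c} := by
  ext w; simp [F.fmin_le_iff hJ]

lemma measurableSet_fmin_le {J : Finset (Fin m)} (hJ : J.Nonempty) (c : ℝ) :
    MeasurableSet {w | F.fmin J w ≤ c} := by
  rw [F.setOf_fmin_le hJ]
  exact MeasurableSet.biUnion J.countable_toSet
    (fun j _ => measurableSet_le (F.p_meas j) measurable_const)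

lemma null_gt_iff (c : ℝ) (w : F.Ω) (hIne : F.I.Nonempty) :
    c < F.nullMin w ↔ ∀ b : Fin F.B, c < F.blockMin b w := by
  rw [nullMin, F.lt_fmin_iff hIne]
  constructor
  · intro h b
    rw [blockMin, F.lt_fmin_iff (F.A_I b)]
    intro j hj
    exact h j (Finset.mem_inter.mp hj).2
  · intro h j hj
    obtain ⟨b, hb⟩ := F.A_cover j
    exact (F.lt_fmin_iff (F.A_I b) c w).mp (h b) j (Finset.mem_inter.mpr ⟨hb, hj⟩)

lemma G_card_pos : 0 < F.G.card := Finset.card_pos.mpr ⟨_, F.G_one⟩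

lemma r_ge_one {r : ℝ} (hB2 : F.B2 r) : 1 ≤ r := by
  have hΩ : Nonempty F.Ω := by
    by_contra h
    rw [not_nonempty_iff] at h
    have h1 : F.Q Set.univ = 1 := measure_univ
    rw [Set.univ_eq_empty_iff.mpr h, measure_empty] at h1
    exact zero_ne_one h1
  obtain ⟨j0, hj0⟩ := F.A_I ⟨0, F.B_pos⟩
  set j := j0
  have w0 : F.Ω := Classical.arbitrary _
  have hSne : F.S.Nonempty := ⟨_, F.p_mem j w0⟩
  set s0 := F.S.max' hSne with hs0
  have hs0S : s0 ∈ F.S := F.S.max'_mem hSne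
  have hs0le : s0 ≤ 1 := (F.hS _ hs0S).2
  have hs0nn : 0 ≤ s0 := (F.hS _ hs0S).1
  have hset : {w' | F.p j w' ≤ s0} = Set.univ := by
    ext w'; simp only [Set.mem_setOf_eq, Set.mem_univ, iff_true]
    exact F.S.le_max' _ (F.p_mem j w')
  have hP : F.Pstar {w' | F.p j w' ≤ s0} w0 = 1 := by
    rw [hset, Pstar]
    simp only [Set.indicator_univ, Finset.sum_const, nsmul_eq_mul, mul_one]
    rw [inv_mul_cancel₀]
    exact Nat.cast_ne_zero.mpr F.G_card_pos.ne'
  have h2 := (hB2 j s0 hs0S w0).2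
  rw [hP] at h2
  have hs0pos : 0 < s0 := by
    rcases eq_or_lt_of_le hs0nn with h | h
    · exfalso; rw [← h, mul_zero] at h2; linarith
    · exact h
  nlinarith

lemma B1_measure_eq (hB1 : F.B1) {j : Fin m} (hj : j ∈ F.I) (c : ℝ) :
    (F.G.card : ℝ≥0∞)⁻¹ * ∑ g ∈ F.G, F.Q {w | F.p j (g w) ≤ c}
      = F.Q {w | F.p j w ≤ c} := by
  classical
  have hmeas : ∀ g : F.Ω ≃ᵐ F.Ω, Measurable (fun w => fun i : F.I => F.p i (g w)) :=
    fun g => measurable_pi_lambda _ (fun i => (F.p_meas i).comp g.measurable)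
  have hmeas0 : Measurable (fun w => fun i : F.I => F.p i w) :=
    measurable_pi_lambda _ (fun i => F.p_meas i)
  have hE : MeasurableSet {f : F.I → ℝ | f ⟨j, hj⟩ ≤ c} :=
    measurableSet_le (measurable_pi_apply _) measurable_const
  have := congrArg (fun μ : Measure (F.I → ℝ) => μ {f : F.I → ℝ | f ⟨j, hj⟩ ≤ c}) hB1
  simp only [Measure.smul_apply, smul_eq_mul] at this
  rw [Measure.finset_sum_apply, Measure.map_apply hmeas0 hE] at this
  have hRHS : (fun w => fun i : F.I => F.p i w) ⁻¹' {f : F.I → ℝ | f ⟨j, hj⟩ ≤ c}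
      = {w | F.p j w ≤ c} := rfl
  rw [hRHS] at this
  have hsum : ∀ g ∈ F.G,
      (Measure.map (fun w => fun i : F.I => F.p i (g w)) F.Q)
        {f : F.I → ℝ | f ⟨j, hj⟩ ≤ c} = F.Q {w | F.p j (g w) ≤ c} :=
    fun g _ => Measure.map_apply (hmeas g) hE
  rw [Finset.sum_congr rfl hsum] at this
  exact this

lemma null_measure_lb {r : ℝ} (hB1 : F.B1) (hB2 : F.B2 r) {j : Fin m} (hj : j ∈ F.I)
    {c : ℝ} (hc : c ∈ F.S) :
    r⁻¹ * c ≤ (F.Q {w | F.p j w ≤ c}).toReal := by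
  classical
  set E := {w : F.Ω | F.p j w ≤ c} with hE
  have hsg : ∀ g : F.Ω ≃ᵐ F.Ω, MeasurableSet {w : F.Ω | F.p j (g w) ≤ c} :=
    fun g => measurableSet_le ((F.p_meas j).comp g.measurable) measurable_const
  have hPt : ∀ w, F.Pstar E w =
      (F.G.card : ℝ)⁻¹ * ∑ g ∈ F.G,
        ({w : F.Ω | F.p j (g w) ≤ c}).indicator (fun _ => (1:ℝ)) w := by
    intro w
    rfl
  have hint : ∀ g ∈ F.G,
      Integrable (({w : F.Ω | F.p j (g w) ≤ c}).indicator (fun _ => (1:ℝ))) F.Q :=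
    fun g _ => (integrable_const 1).indicator (hsg g)
  have hPint : Integrable (F.Pstar E) F.Q := by
    have : F.Pstar E = fun w => (F.G.card : ℝ)⁻¹ * ∑ g ∈ F.G,
        ({w : F.Ω | F.p j (g w) ≤ c}).indicator (fun _ => (1:ℝ)) w := funext hPt
    rw [this]
    exact ((integrable_finset_sum _ hint).const_mul _)
  have hI : ∫ w, F.Pstar E w ∂F.Q
      = (F.G.card : ℝ)⁻¹ * ∑ g ∈ F.G, (F.Q {w | F.p j (g w) ≤ c}).toReal := by
    simp_rw [hPt]
    rw [integral_const_mul, integral_finset_sum _ hint]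
    congr 1
    refine Finset.sum_congr rfl fun g _ => ?_
    rw [integral_indicator_const (1 : ℝ) (hsg g), smul_eq_mul, mul_one, measureReal_def]
  have hlb : r⁻¹ * c ≤ ∫ w, F.Pstar E w ∂F.Q := by
    have hm := integral_mono (integrable_const (r⁻¹ * c)) hPint (fun w => (hB2 j c hc w).1)
    simpa using hm
  have hconv : (F.G.card : ℝ)⁻¹ * ∑ g ∈ F.G, (F.Q {w | F.p j (g w) ≤ c}).toReal
      = ((F.G.card : ℝ≥0∞)⁻¹ * ∑ g ∈ F.G, F.Q {w | F.p j (g w) ≤ c}).toReal := by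
    rw [ENNReal.toReal_mul, ENNReal.toReal_sum (fun g _ => measure_ne_top _ _)]
    congr 1
    simp
  calc r⁻¹ * c ≤ ∫ w, F.Pstar E w ∂F.Q := hlb
    _ = (F.G.card : ℝ)⁻¹ * ∑ g ∈ F.G, (F.Q {w | F.p j (g w) ≤ c}).toReal := hI
    _ = ((F.G.card : ℝ≥0∞)⁻¹ * ∑ g ∈ F.G, F.Q {w | F.p j (g w) ≤ c}).toReal := hconv
    _ = (F.Q E).toReal := by rw [F.B1_measure_eq hB1 hj c]

end Framework

/-- **Upper bound on the oracle threshold.** Under (A1), (B1) and (B2) with constant `r`,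
for `α ∈ (0,1)`: `1 − α ≤ (1 − c(α)/r)^B`, and consequently
`c(α) ≤ r(1 − (1−α)^{1/B}) ≤ r·log(1/(1−α))/B`. -/
theorem oracle_threshold_upper_bound
    {m : ℕ} (F : Framework m) (r : ℝ)
    (hA1 : F.A1) (hB1 : F.B1) (hB2 : F.B2 r)
    (α : ℝ) (hα : α ∈ Set.Ioo (0 : ℝ) 1) :
    1 - α ≤ (1 - F.oracle α / r) ^ F.B ∧
    F.oracle α ≤ r * (1 - (1 - α) ^ ((F.B : ℝ)⁻¹)) ∧
    r * (1 - (1 - α) ^ ((F.B : ℝ)⁻¹)) ≤ r * Real.log (1 / (1 - α)) / (F.B : ℝ) := by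
  obtain ⟨hα0, hα1⟩ := hα
  have hr1 : (1:ℝ) ≤ r := F.r_ge_one hB2
  have hr0 : (0:ℝ) < r := lt_of_lt_of_le one_pos hr1
  have hIne : F.I.Nonempty := by
    obtain ⟨j, hj⟩ := F.A_I ⟨0, F.B_pos⟩
    exact ⟨j, (Finset.mem_inter.mp hj).2⟩
  set c := F.oracle α with hc_def
  have hc_cases : c = 0 ∨ (c ∈ F.S ∧ (F.Q {w | F.nullMin w ≤ c}).toReal ≤ α) := by
    rw [hc_def, Framework.oracle]
    rcases hmax : (F.S.filter fun s => (F.Q {w | F.nullMin w ≤ s}).toReal ≤ α).max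
      with _ | v
    · left; rfl
    · right
      have hv := Finset.mem_of_max hmax
      simp only [Finset.mem_filter] at hv
      exact hv
  have hc0 : 0 ≤ c := by
    rcases hc_cases with h | h
    · rw [h]
    · exact (F.hS _ h.1).1
  have hc1 : c ≤ 1 := by
    rcases hc_cases with h | h
    · rw [h]; norm_num
    · exact (F.hS _ h.1).2
  have h1 : 1 - α ≤ (1 - c / r) ^ F.B := by
    rcases hc_cases with h0 | ⟨hcS, hQc⟩
    · rw [h0, zero_div, sub_zero, one_pow]; linarith
    · have hind : iIndepFun
          (fun b : Fin F.B => F.blockMin b) F.Q := by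
        have h := hA1 _ F.G_one _ F.G_one
        have heq : (fun b : Fin F.B => fun w =>
            min (F.blockMin b ((MeasurableEquiv.refl F.Ω) w))
              (F.blockMin b ((MeasurableEquiv.refl F.Ω) w)))
            = fun b : Fin F.B => F.blockMin b := by
          funext b w
          simp [min_self]
        rwa [heq] at h
      have hprod := hind.measure_inter_preimage_eq_mul Finset.univ
        (sets := fun _ => Set.Ioi c) (fun i _ => measurableSet_Ioi)
      have hcompl : {w | F.nullMin w ≤ c}ᶜ
          = ⋂ b ∈ Finset.univ, (F.blockMin b) ⁻¹' Set.Ioi c := by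
        ext w
        simp only [Set.mem_compl_iff, Set.mem_setOf_eq, not_le, Set.mem_iInter,
          Set.mem_preimage, Set.mem_Ioi, Finset.mem_univ]
        constructor
        · intro h b _; exact (F.null_gt_iff c w hIne).mp h b
        · intro h; exact (F.null_gt_iff c w hIne).mpr fun b => h b trivial
      have hms : MeasurableSet {w | F.nullMin w ≤ c} := F.measurableSet_fmin_le hIne c
      have key : 1 - (F.Q {w | F.nullMin w ≤ c}).toReal
          = ∏ b : Fin F.B, (F.Q (F.blockMin b ⁻¹' Set.Ioi c)).toReal := by
        calc 1 - (F.Q {w | F.nullMin w ≤ c}).toReal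
            = ((1 : ℝ≥0∞) - F.Q {w | F.nullMin w ≤ c}).toReal := by
              rw [ENNReal.toReal_sub_of_le prob_le_one ENNReal.one_ne_top,
                ENNReal.toReal_one]
          _ = (F.Q ({w | F.nullMin w ≤ c}ᶜ)).toReal := by
              rw [prob_compl_eq_one_sub hms]
          _ = (F.Q (⋂ b ∈ Finset.univ, (F.blockMin b) ⁻¹' Set.Ioi c)).toReal := by
              rw [hcompl]
          _ = (∏ b : Fin F.B, F.Q (F.blockMin b ⁻¹' Set.Ioi c)).toReal := by
              rw [hprod]
          _ = ∏ b : Fin F.B, (F.Q (F.blockMin b ⁻¹' Set.Ioi c)).toReal :=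
              ENNReal.toReal_prod _ _
      have hfac : ∀ b : Fin F.B,
          (F.Q (F.blockMin b ⁻¹' Set.Ioi c)).toReal ≤ 1 - c / r := by
        intro b
        have hmb : MeasurableSet {w | F.blockMin b w ≤ c} :=
          F.measurableSet_fmin_le (F.A_I b) c
        have hpre : F.blockMin b ⁻¹' Set.Ioi c = {w | F.blockMin b w ≤ c}ᶜ := by
          ext w; simp [not_le]
        obtain ⟨j, hj⟩ := F.A_I b
        have hjI : j ∈ F.I := (Finset.mem_inter.mp hj).2
        have hsub : {w | F.p j w ≤ c} ⊆ {w | F.blockMin b w ≤ c} := by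
          intro w hw
          exact (F.fmin_le_iff (F.A_I b) c w).mpr ⟨j, hj, hw⟩
        have hb1 : r⁻¹ * c ≤ (F.Q {w | F.p j w ≤ c}).toReal :=
          F.null_measure_lb hB1 hB2 hjI hcS
        have hb2 : (F.Q {w | F.p j w ≤ c}).toReal
            ≤ (F.Q {w | F.blockMin b w ≤ c}).toReal :=
          ENNReal.toReal_mono (measure_ne_top _ _) (measure_mono hsub)
        rw [hpre, prob_compl_eq_one_sub hmb,
          ENNReal.toReal_sub_of_le prob_le_one ENNReal.one_ne_top, ENNReal.toReal_one]
        have hdiv : r⁻¹ * c = c / r := by ring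
        linarith [hb1.trans hb2]
      have hfacnn : ∀ b : Fin F.B,
          (0:ℝ) ≤ (F.Q (F.blockMin b ⁻¹' Set.Ioi c)).toReal :=
        fun b => ENNReal.toReal_nonneg
      calc 1 - α ≤ 1 - (F.Q {w | F.nullMin w ≤ c}).toReal := by linarith
        _ = ∏ b : Fin F.B, (F.Q (F.blockMin b ⁻¹' Set.Ioi c)).toReal := key
        _ ≤ ∏ _b : Fin F.B, (1 - c / r) :=
            Finset.prod_le_prod (fun b _ => hfacnn b) (fun b _ => hfac b)
        _ = (1 - c / r) ^ F.B := by
            rw [Finset.prod_const, Finset.card_univ, Fintype.card_fin]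
  have hBne : (F.B : ℝ) ≠ 0 := Nat.cast_ne_zero.mpr F.B_pos.ne'
  have hBpos : (0:ℝ) < (F.B : ℝ) := Nat.cast_pos.mpr F.B_pos
  have hcr : c / r ≤ 1 := by
    rw [div_le_one hr0]; linarith
  have hbase : (0:ℝ) ≤ 1 - c / r := by linarith
  have h1a : (0:ℝ) ≤ 1 - α := by linarith
  have h2 : c ≤ r * (1 - (1 - α) ^ ((F.B : ℝ)⁻¹)) := by
    have hmono := Real.rpow_le_rpow h1a h1 (by positivity : (0:ℝ) ≤ (F.B:ℝ)⁻¹)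
    rw [← Real.rpow_natCast (1 - c/r) F.B, ← Real.rpow_mul hbase,
      mul_inv_cancel₀ hBne, Real.rpow_one] at hmono
    have hstep : c / r ≤ 1 - (1 - α) ^ ((F.B:ℝ)⁻¹) := by linarith
    calc c = r * (c / r) := by field_simp
      _ ≤ r * (1 - (1 - α) ^ ((F.B:ℝ)⁻¹)) :=
        mul_le_mul_of_nonneg_left hstep hr0.le
  have h3 : r * (1 - (1 - α) ^ ((F.B : ℝ)⁻¹))
      ≤ r * Real.log (1 / (1 - α)) / (F.B : ℝ) := by
    have h1apos : (0:ℝ) < 1 - α := by linarith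
    have hrpow : (1 - α) ^ ((F.B:ℝ)⁻¹)
        = Real.exp (Real.log (1 - α) * (F.B:ℝ)⁻¹) :=
      Real.rpow_def_of_pos h1apos _
    have hexp : Real.log (1 - α) * (F.B:ℝ)⁻¹ + 1
        ≤ Real.exp (Real.log (1 - α) * (F.B:ℝ)⁻¹) := Real.add_one_le_exp _
    have hlog : Real.log (1 / (1 - α)) = -Real.log (1 - α) := by
      rw [one_div, Real.log_inv]
    have hstep : 1 - (1 - α) ^ ((F.B:ℝ)⁻¹) ≤ Real.log (1 / (1 - α)) / (F.B:ℝ) := by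
      rw [hrpow, hlog]
      have : -Real.log (1 - α) / (F.B:ℝ) = -(Real.log (1 - α) * (F.B:ℝ)⁻¹) := by
        ring
      rw [this]
      linarith
    calc r * (1 - (1 - α) ^ ((F.B:ℝ)⁻¹))
        ≤ r * (Real.log (1 / (1 - α)) / (F.B:ℝ)) :=
          mul_le_mul_of_nonneg_left hstep hr0.le
      _ = r * Real.log (1 / (1 - α)) / (F.B:ℝ) := by ring
  exact ⟨h1, h2, h3⟩
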